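/- arXiv:1403.7799 — 5 statements merged into one kernel-verified Lean document; each statement's English description precedes it below -/
import Mathlib

section
/- Let σ > 0, k ≥ 0, 0 < β < 1, δ_π ≥ 0, δ_x ≥ 0, set D := σ + δ_x + k·δ_π, and let A be the real 2×2 matrix A = (1/D)·[[σ, 1 − β·δ_π], [k·σ, k + β·(σ + δ_x)]]. Then every (complex) eigenvalue of A has modulus strictly less than 1 if and only if k·(δ_π − 1) + (1 − β)·δ_x > 0. -/
open Matrix

lemma quad_stab (t d : ℝ) (ht : 0 < t) (hd0 : 0 < d) (hd1 : d < 1) :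
    (∀ μ : ℂ, μ^2 - t*μ + d = 0 → ‖μ‖ < 1) ↔ 0 < 1 - t + d := by
  constructor
  · intro h
    by_contra h1
    push_neg at h1
    have htd : 1 + d ≤ t := by linarith
    have hΔ : 0 ≤ t^2 - 4*d := by nlinarith [sq_nonneg (1 - d)]
    set s := Real.sqrt (t^2 - 4*d) with hs
    have hs2 : s^2 = t^2 - 4*d := Real.sq_sqrt hΔ
    have hs0 : 0 ≤ s := Real.sqrt_nonneg _
    set r := (t + s)/2 with hr
    have hroot : r^2 - t*r + d = 0 := by
      rw [hr]; ring_nf; nlinarith [hs2]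
    have hr1 : 1 ≤ r := by
      rcases le_or_gt 2 t with h2 | h2
      · rw [hr]; linarith
      · have : (2 - t)^2 ≤ s^2 := by nlinarith
        have : 2 - t ≤ s := by nlinarith
        rw [hr]; linarith
    have := h r (by exact_mod_cast congrArg (Complex.ofReal) hroot)
    rw [Complex.norm_real, Real.norm_eq_abs] at this
    have : r < 1 := lt_of_abs_lt this
    linarith
  · intro h1 μ hμ
    by_cases him : μ.im = 0
    · have hμr : μ = (μ.re : ℂ) := by
        exact (Complex.ext_iff.mpr ⟨by simp, by simp [him]⟩).symm
      set r := μ.re with hrdef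
      rw [hμr] at hμ
      have hroot : r^2 - t*r + d = 0 := by
        exact_mod_cast hμ
      have hrn : -1 < r := by
        by_contra hc
        push_neg at hc
        nlinarith
      have hrp : r < 1 := by
        by_contra hc
        push_neg at hc
        nlinarith
      rw [hμr, Complex.norm_real, Real.norm_eq_abs]
      exact abs_lt.mpr ⟨hrn, hrp⟩
    · have hconj : (starRingEnd ℂ) μ ^ 2 - t * (starRingEnd ℂ) μ + d = 0 := by
        have := congrArg (starRingEnd ℂ) hμ
        simpa [map_sub, map_add, _root_.map_mul, map_pow] using this
      have hdiff : (μ + (starRingEnd ℂ) μ) * (μ - (starRingEnd ℂ) μ)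
          = t * (μ - (starRingEnd ℂ) μ) := by
        linear_combination hμ - hconj
      have hne : μ - (starRingEnd ℂ) μ ≠ 0 := by
        intro hc
        exact him (Complex.conj_eq_iff_im.mp (sub_eq_zero.mp hc).symm)
      have hsum : μ + (starRingEnd ℂ) μ = t := mul_right_cancel₀ hne hdiff
      have hprod : μ * (starRingEnd ℂ) μ = d := by
        have h2 : μ * ((t : ℂ) - μ) = d := by linear_combination -hμ
        rw [← h2]
        congr 1
        linear_combination hsum
      have hnsq : Complex.normSq μ = d := by
        rw [Complex.mul_conj] at hprod
        exact_mod_cast hprod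
      have : ‖μ‖ ^ 2 = d := by
        rw [Complex.sq_norm, hnsq]
      nlinarith [norm_nonneg μ]

lemma dsge_spectrum_mem (σ k β δπ δx : ℝ)
    (hσ : 0 < σ) (hk : 0 ≤ k) (hδπ : 0 ≤ δπ) (hδx : 0 ≤ δx) (μ : ℂ) :
    μ ∈ spectrum ℂ
        ((((1 / (σ + δx + k * δπ)) •
            !![σ, 1 - β * δπ; k * σ, k + β * (σ + δx)]).map (algebraMap ℝ ℂ)))
    ↔ μ^2 - (((σ + k + β*(σ+δx))/(σ + δx + k * δπ) : ℝ) : ℂ)*μ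
        + ((σ*β/(σ + δx + k * δπ) : ℝ) : ℂ) = 0 := by
  have hD : (σ + δx + k * δπ) ≠ 0 := by positivity
  have hDc : ((σ : ℂ) + δx + k * δπ) ≠ 0 := by
    intro hc; apply hD; exact_mod_cast congrArg Complex.re hc
  have hM : (((1 / (σ + δx + k * δπ)) •
      !![σ, 1 - β * δπ; k * σ, k + β * (σ + δx)]).map (algebraMap ℝ ℂ))
      = !![((σ/(σ + δx + k * δπ) : ℝ) : ℂ), (((1 - β * δπ)/(σ + δx + k * δπ) : ℝ) : ℂ);
           ((k*σ/(σ + δx + k * δπ) : ℝ) : ℂ), (((k + β*(σ+δx))/(σ + δx + k * δπ) : ℝ) : ℂ)] := by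
    ext i j
    fin_cases i <;> fin_cases j <;>
      simp [Matrix.map_apply, Complex.ofReal_div] <;> ring
  rw [hM, spectrum.mem_iff, Matrix.isUnit_iff_isUnit_det, isUnit_iff_ne_zero, not_ne_iff,
    Matrix.det_fin_two]
  simp [Matrix.algebraMap_matrix_apply]
  have key : (μ - ((σ/(σ + δx + k * δπ) : ℝ) : ℂ)) * (μ - (((k + β*(σ+δx))/(σ + δx + k * δπ) : ℝ) : ℂ))
      - (((1 - β * δπ)/(σ + δx + k * δπ) : ℝ) : ℂ) * ((k*σ/(σ + δx + k * δπ) : ℝ) : ℂ)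
      = μ^2 - (((σ + k + β*(σ+δx))/(σ + δx + k * δπ) : ℝ) : ℂ)*μ
        + ((σ*β/(σ + δx + k * δπ) : ℝ) : ℂ) := by
    push_cast
    field_simp
    ring
  push_cast at key
  rw [key]

/-- Bullard–Mitra stability condition: both eigenvalues of the DSGE
transition matrix `A` lie strictly inside the unit circle iff
`k·(δπ − 1) + (1 − β)·δx > 0`. -/
theorem dsge_stability_condition
    (σ k β δπ δx : ℝ)
    (hσ : 0 < σ) (hk : 0 ≤ k) (hβ0 : 0 < β) (hβ1 : β < 1)
    (hδπ : 0 ≤ δπ) (hδx : 0 ≤ δx) :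
    (∀ μ ∈ spectrum ℂ
        ((((1 / (σ + δx + k * δπ)) •
            !![σ, 1 - β * δπ; k * σ, k + β * (σ + δx)]).map (algebraMap ℝ ℂ))),
      ‖μ‖ < 1) ↔
    k * (δπ - 1) + (1 - β) * δx > 0 := by
  have hD : 0 < σ + δx + k * δπ := by positivity
  set D := σ + δx + k * δπ with hDdef
  set t := (σ + k + β*(σ+δx))/D with htdef
  set d := σ*β/D with hddef
  have ht : 0 < t := by apply div_pos; nlinarith; exact hD
  have hd0 : 0 < d := by apply div_pos; positivity; exact hD
  have hd1 : d < 1 := by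
    rw [hddef, div_lt_one hD]
    nlinarith
  have hmem : ∀ μ : ℂ, μ ∈ spectrum ℂ
        ((((1 / (σ + δx + k * δπ)) •
            !![σ, 1 - β * δπ; k * σ, k + β * (σ + δx)]).map (algebraMap ℝ ℂ)))
      ↔ μ^2 - (t : ℂ)*μ + (d : ℂ) = 0 :=
    fun μ => dsge_spectrum_mem σ k β δπ δx hσ hk hδπ hδx μ
  have hiff : (∀ μ : ℂ, μ^2 - (t:ℝ)*μ + (d:ℝ) = 0 → ‖μ‖ < 1) ↔ 0 < 1 - t + d :=
    quad_stab t d ht hd0 hd1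
  constructor
  · intro h
    have h1 : 0 < 1 - t + d := hiff.mp (fun μ hμ => h μ ((hmem μ).mpr hμ))
    have : 1 - t + d = (k * (δπ - 1) + (1 - β) * δx) / D := by
      rw [htdef, hddef]
      field_simp
      ring
    rw [this] at h1
    exact (div_pos_iff.mp h1).resolve_right (fun ⟨_, h2⟩ => absurd hD (not_lt.mpr h2.le)) |>.1
  · intro h μ hμ
    have h1 : 0 < 1 - t + d := by
      have : 1 - t + d = (k * (δπ - 1) + (1 - β) * δx) / D := by
        rw [htdef, hddef]
        field_simp
        ring
      rw [this]
      exact div_pos h hD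
    exact hiff.mpr h1 μ ((hmem μ).mp hμ)
end

section
/- Let X be a positive random variable such that log X has a Gaussian distribution with mean M and variance V² with V > 0, let K > 0, and let ω ∈ {−1, 1}. Then E[max(ω·(X − K), 0)] = ω·exp(M + V²/2)·N(ω·(M − log K + V²)/V) − ω·K·N(ω·(M − log K)/V), where N denotes the standard normal cumulative distribution function N(x) = ∫_{−∞}^x (2π)^{−1/2} e^{−t²/2} dt. -/
open MeasureTheory ProbabilityTheory
open scoped NNReal ENNReal

/-- The standard normal cumulative distribution function. -/
noncomputable def stdNormalCDF (x : ℝ) : ℝ :=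
  ∫ t in Set.Iic x, (Real.sqrt (2 * Real.pi))⁻¹ * Real.exp (-t ^ 2 / 2)

namespace LognormalAux

open Real Set

lemma sqrt_two_pi_V {V : ℝ} (hV : 0 < V) :
    Real.sqrt (2 * Real.pi * V ^ 2) = Real.sqrt (2 * Real.pi) * V := by
  rw [Real.sqrt_mul (by positivity), Real.sqrt_sq hV.le]

/-- Scaled std normal density equals `V · pdf(M + V t)`. -/
lemma pdf_affine {M V : ℝ} (hV : 0 < V) (c : ℝ) (hc : c ^ 2 = V ^ 2) (t : ℝ) :
    V * gaussianPDFReal M (⟨V ^ 2, sq_nonneg V⟩ : ℝ≥0) (M + c * t)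
      = (Real.sqrt (2 * Real.pi))⁻¹ * Real.exp (-t ^ 2 / 2) := by
  unfold gaussianPDFReal
  erw [NNReal.coe_mk]
  rw [sqrt_two_pi_V hV]
  have h1 : M + c * t - M = c * t := by ring
  rw [h1]
  have h2 : -(c * t) ^ 2 / (2 * V ^ 2) = -t ^ 2 / 2 := by
    rw [mul_pow, hc]; field_simp
  rw [h2]
  field_simp

lemma cdf_Iic {M V : ℝ} (hV : 0 < V) (a : ℝ) :
    ∫ y in Set.Iic a, gaussianPDFReal M (⟨V ^ 2, sq_nonneg V⟩ : ℝ≥0) y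
      = stdNormalCDF ((a - M) / V) := by
  classical
  set v : ℝ≥0 := (⟨V ^ 2, sq_nonneg V⟩ : ℝ≥0)
  set G : ℝ → ℝ := Set.indicator (Set.Iic a) (gaussianPDFReal M v) with hG
  have h1 : ∫ y in Set.Iic a, gaussianPDFReal M v y = ∫ y, G y :=
    (integral_indicator measurableSet_Iic).symm
  have h2 : ∫ t : ℝ, G (M + V * t) = |V⁻¹| • ∫ s : ℝ, G (M + s) :=
    MeasureTheory.Measure.integral_comp_mul_left (fun s => G (M + s)) V
  have h3 : ∫ s : ℝ, G (M + s) = ∫ y, G y :=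
    MeasureTheory.integral_add_left_eq_self G M
  have h4 : ∫ y, G y = V * ∫ t : ℝ, G (M + V * t) := by
    rw [h2, h3, abs_of_pos (inv_pos.2 hV), smul_eq_mul, ← mul_assoc,
      mul_inv_cancel₀ hV.ne', one_mul]
  have h5 : ∀ t : ℝ, G (M + V * t)
      = Set.indicator (Set.Iic ((a - M) / V)) (fun t => gaussianPDFReal M v (M + V * t)) t := by
    intro t
    rw [hG]
    have hiff : M + V * t ≤ a ↔ t ≤ (a - M) / V := by
      rw [le_div_iff₀ hV]; constructor <;> intro h <;> nlinarith
    by_cases h : t ≤ (a - M) / V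
    · rw [Set.indicator_of_mem (Set.mem_Iic.2 (hiff.2 h)),
        Set.indicator_of_mem (Set.mem_Iic.2 h)]
    · rw [Set.indicator_of_notMem (fun hm => h (hiff.1 (Set.mem_Iic.1 hm))),
        Set.indicator_of_notMem (fun hm => h (Set.mem_Iic.1 hm))]
  rw [h1, h4]
  simp_rw [h5]
  rw [integral_indicator measurableSet_Iic, ← integral_const_mul]
  unfold stdNormalCDF
  exact setIntegral_congr_fun measurableSet_Iic fun t _ => pdf_affine hV V rfl t

lemma cdf_Ici {M V : ℝ} (hV : 0 < V) (a : ℝ) :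
    ∫ y in Set.Ici a, gaussianPDFReal M (⟨V ^ 2, sq_nonneg V⟩ : ℝ≥0) y
      = stdNormalCDF ((M - a) / V) := by
  classical
  set v : ℝ≥0 := (⟨V ^ 2, sq_nonneg V⟩ : ℝ≥0)
  set G : ℝ → ℝ := Set.indicator (Set.Ici a) (gaussianPDFReal M v) with hG
  have h1 : ∫ y in Set.Ici a, gaussianPDFReal M v y = ∫ y, G y :=
    (integral_indicator measurableSet_Ici).symm
  have h2 : ∫ t : ℝ, G (M + (-V) * t) = |(-V)⁻¹| • ∫ s : ℝ, G (M + s) :=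
    MeasureTheory.Measure.integral_comp_mul_left (fun s => G (M + s)) (-V)
  have h3 : ∫ s : ℝ, G (M + s) = ∫ y, G y :=
    MeasureTheory.integral_add_left_eq_self G M
  have h4 : ∫ y, G y = V * ∫ t : ℝ, G (M + (-V) * t) := by
    rw [h2, h3, abs_inv, abs_neg, abs_of_pos hV, smul_eq_mul, ← mul_assoc,
      mul_inv_cancel₀ hV.ne', one_mul]
  have h5 : ∀ t : ℝ, G (M + (-V) * t)
      = Set.indicator (Set.Iic ((M - a) / V)) (fun t => gaussianPDFReal M v (M + (-V) * t)) t := by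
    intro t
    rw [hG]
    have hiff : a ≤ M + (-V) * t ↔ t ≤ (M - a) / V := by
      rw [le_div_iff₀ hV]; constructor <;> intro h <;> nlinarith
    by_cases h : t ≤ (M - a) / V
    · rw [Set.indicator_of_mem (Set.mem_Ici.2 (hiff.2 h)),
        Set.indicator_of_mem (Set.mem_Iic.2 h)]
    · rw [Set.indicator_of_notMem (fun hm => h (hiff.1 (Set.mem_Ici.1 hm))),
        Set.indicator_of_notMem (fun hm => h (Set.mem_Iic.1 hm))]
  rw [h1, h4]
  simp_rw [h5]
  rw [integral_indicator measurableSet_Iic, ← integral_const_mul]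
  unfold stdNormalCDF
  refine setIntegral_congr_fun measurableSet_Iic fun t _ => pdf_affine hV (-V) (by ring) t

/-- Completing the square. -/
lemma exp_mul_pdf {M V : ℝ} (hV : 0 < V) (y : ℝ) :
    Real.exp y * gaussianPDFReal M (⟨V ^ 2, sq_nonneg V⟩ : ℝ≥0) y
      = Real.exp (M + V ^ 2 / 2)
          * gaussianPDFReal (M + V ^ 2) (⟨V ^ 2, sq_nonneg V⟩ : ℝ≥0) y := by
  unfold gaussianPDFReal
  erw [NNReal.coe_mk]
  rw [mul_left_comm, mul_left_comm (Real.exp (M + V ^ 2 / 2)), ← Real.exp_add, ← Real.exp_add]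
  congr 1
  have h2 : (2 : ℝ) * V ^ 2 ≠ 0 := by positivity
  field_simp
  ring

lemma integrable_exp_mul_pdf {M V : ℝ} (hV : 0 < V) :
    Integrable (fun y => Real.exp y * gaussianPDFReal M (⟨V ^ 2, sq_nonneg V⟩ : ℝ≥0) y) := by
  have : (fun y => Real.exp y * gaussianPDFReal M (⟨V ^ 2, sq_nonneg V⟩ : ℝ≥0) y)
      = fun y => Real.exp (M + V ^ 2 / 2)
          * gaussianPDFReal (M + V ^ 2) (⟨V ^ 2, sq_nonneg V⟩ : ℝ≥0) y := by
    funext y; exact exp_mul_pdf hV y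
  rw [this]
  exact (integrable_gaussianPDFReal _ _).const_mul _

lemma vne {V : ℝ} (hV : 0 < V) : (⟨V ^ 2, sq_nonneg V⟩ : ℝ≥0) ≠ 0 := by
  intro h
  have := congrArg (fun x : ℝ≥0 => (x : ℝ)) h
  change V ^ 2 = 0 at this
  nlinarith

/-- Integral against the gaussian measure as a Lebesgue integral against the pdf. -/
lemma integral_gaussianReal {M V : ℝ} (hV : 0 < V) (g : ℝ → ℝ) :
    ∫ y, g y ∂(gaussianReal M (⟨V ^ 2, sq_nonneg V⟩ : ℝ≥0))
      = ∫ y, gaussianPDFReal M (⟨V ^ 2, sq_nonneg V⟩ : ℝ≥0) y * g y := by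
  rw [gaussianReal_of_var_ne_zero M (vne hV)]
  have hmeas : Measurable fun y =>
      (gaussianPDFReal M (⟨V ^ 2, sq_nonneg V⟩ : ℝ≥0) y).toNNReal :=
    (measurable_gaussianPDFReal _ _).real_toNNReal
  rw [show gaussianPDF M (⟨V ^ 2, sq_nonneg V⟩ : ℝ≥0)
      = fun y => ((gaussianPDFReal M (⟨V ^ 2, sq_nonneg V⟩ : ℝ≥0) y).toNNReal : ℝ≥0∞) from rfl,
    integral_withDensity_eq_integral_smul hmeas]
  refine integral_congr_ae (Filter.Eventually.of_forall fun y => ?_)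
  simp only [NNReal.smul_def, smul_eq_mul, Real.coe_toNNReal _ (gaussianPDFReal_nonneg _ _ _)]
  erw [Real.coe_toNNReal _ (gaussianPDFReal_nonneg _ _ _)]

/-- Call price under the gaussian law of the log. -/
lemma call_integral {M V : ℝ} (hV : 0 < V) {K : ℝ} (hK : 0 < K) :
    ∫ y, max (Real.exp y - K) 0 ∂(gaussianReal M (⟨V ^ 2, sq_nonneg V⟩ : ℝ≥0))
      = Real.exp (M + V ^ 2 / 2) * stdNormalCDF ((M - Real.log K + V ^ 2) / V)
          - K * stdNormalCDF ((M - Real.log K) / V) := by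
  set v : ℝ≥0 := (⟨V ^ 2, sq_nonneg V⟩ : ℝ≥0)
  rw [integral_gaussianReal hV]
  have hpt : ∀ y, gaussianPDFReal M v y * max (Real.exp y - K) 0
      = Set.indicator (Set.Ici (Real.log K))
          (fun y => Real.exp y * gaussianPDFReal M v y - K * gaussianPDFReal M v y) y := by
    intro y
    by_cases h : Real.log K ≤ y
    · have hKe : K ≤ Real.exp y := (Real.log_le_iff_le_exp hK).1 h
      rw [Set.indicator_of_mem (Set.mem_Ici.2 h), max_eq_left (by linarith)]
      ring
    · have hKe : Real.exp y < K := by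
        by_contra hc
        exact h ((Real.log_le_iff_le_exp hK).2 (not_lt.1 hc))
      rw [Set.indicator_of_notMem (by simpa using h), max_eq_right (by linarith), mul_zero]
  change ∫ y, gaussianPDFReal M v y * max (Real.exp y - K) 0 = _
  simp_rw [hpt]
  rw [integral_indicator measurableSet_Ici]
  rw [integral_sub ((integrable_exp_mul_pdf hV).integrableOn)
    (((integrable_gaussianPDFReal M v).const_mul K).integrableOn)]
  have hc1 : ∫ y in Set.Ici (Real.log K), Real.exp y * gaussianPDFReal M v y
      = Real.exp (M + V ^ 2 / 2) * stdNormalCDF ((M - Real.log K + V ^ 2) / V) := by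
    calc ∫ y in Set.Ici (Real.log K), Real.exp y * gaussianPDFReal M v y
        = ∫ y in Set.Ici (Real.log K), Real.exp (M + V ^ 2 / 2) * gaussianPDFReal (M + V ^ 2) v y :=
          setIntegral_congr_fun measurableSet_Ici fun y _ => exp_mul_pdf hV y
      _ = Real.exp (M + V ^ 2 / 2)
            * ∫ y in Set.Ici (Real.log K), gaussianPDFReal (M + V ^ 2) v y := integral_const_mul _ _
      _ = Real.exp (M + V ^ 2 / 2) * stdNormalCDF ((M + V ^ 2 - Real.log K) / V) := by
          rw [cdf_Ici hV]
      _ = Real.exp (M + V ^ 2 / 2) * stdNormalCDF ((M - Real.log K + V ^ 2) / V) := by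
          ring_nf
  have hc2 : ∫ y in Set.Ici (Real.log K), K * gaussianPDFReal M v y
      = K * stdNormalCDF ((M - Real.log K) / V) := by
    rw [integral_const_mul, cdf_Ici hV]
  rw [hc1, hc2]

/-- Put price under the gaussian law of the log. -/
lemma put_integral {M V : ℝ} (hV : 0 < V) {K : ℝ} (hK : 0 < K) :
    ∫ y, max (K - Real.exp y) 0 ∂(gaussianReal M (⟨V ^ 2, sq_nonneg V⟩ : ℝ≥0))
      = K * stdNormalCDF ((Real.log K - M) / V)
          - Real.exp (M + V ^ 2 / 2) * stdNormalCDF ((Real.log K - M - V ^ 2) / V) := by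
  set v : ℝ≥0 := (⟨V ^ 2, sq_nonneg V⟩ : ℝ≥0)
  rw [integral_gaussianReal hV]
  have hpt : ∀ y, gaussianPDFReal M v y * max (K - Real.exp y) 0
      = Set.indicator (Set.Iic (Real.log K))
          (fun y => K * gaussianPDFReal M v y - Real.exp y * gaussianPDFReal M v y) y := by
    intro y
    by_cases h : y ≤ Real.log K
    · have hKe : Real.exp y ≤ K := (Real.le_log_iff_exp_le hK).1 h
      rw [Set.indicator_of_mem (Set.mem_Iic.2 h), max_eq_left (by linarith)]
      ring
    · have hKe : K < Real.exp y := by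
        by_contra hc
        exact h ((Real.le_log_iff_exp_le hK).2 (not_lt.1 hc))
      rw [Set.indicator_of_notMem (by simpa using h), max_eq_right (by linarith), mul_zero]
  change ∫ y, gaussianPDFReal M v y * max (K - Real.exp y) 0 = _
  simp_rw [hpt]
  rw [integral_indicator measurableSet_Iic]
  rw [integral_sub (((integrable_gaussianPDFReal M v).const_mul K).integrableOn)
    ((integrable_exp_mul_pdf hV).integrableOn)]
  have hc2 : ∫ y in Set.Iic (Real.log K), K * gaussianPDFReal M v y
      = K * stdNormalCDF ((Real.log K - M) / V) := by
    rw [integral_const_mul, cdf_Iic hV]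
  have hc1 : ∫ y in Set.Iic (Real.log K), Real.exp y * gaussianPDFReal M v y
      = Real.exp (M + V ^ 2 / 2) * stdNormalCDF ((Real.log K - M - V ^ 2) / V) := by
    calc ∫ y in Set.Iic (Real.log K), Real.exp y * gaussianPDFReal M v y
        = ∫ y in Set.Iic (Real.log K), Real.exp (M + V ^ 2 / 2) * gaussianPDFReal (M + V ^ 2) v y :=
          setIntegral_congr_fun measurableSet_Iic fun y _ => exp_mul_pdf hV y
      _ = Real.exp (M + V ^ 2 / 2)
            * ∫ y in Set.Iic (Real.log K), gaussianPDFReal (M + V ^ 2) v y := integral_const_mul _ _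
      _ = Real.exp (M + V ^ 2 / 2) * stdNormalCDF ((Real.log K - (M + V ^ 2)) / V) := by
          rw [cdf_Iic hV]
      _ = Real.exp (M + V ^ 2 / 2) * stdNormalCDF ((Real.log K - M - V ^ 2) / V) := by
          ring_nf
  rw [hc1, hc2]

end LognormalAux

/-- Black-type formula for the undiscounted price of a European vanilla
option on a lognormally distributed asset `X` with `log X ~ N(M, V²)`. -/
theorem lognormal_option_price
    {Ω : Type*} [MeasurableSpace Ω] (P : Measure Ω) [IsProbabilityMeasure P]
    (X : Ω → ℝ) (hXpos : ∀ ω, 0 < X ω)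
    (M V : ℝ) (hV : 0 < V)
    (hlaw : Measure.map (fun ω => Real.log (X ω)) P =
      gaussianReal M (⟨V ^ 2, sq_nonneg V⟩ : ℝ≥0))
    (K : ℝ) (hK : 0 < K) (w : ℝ) (hw : w = -1 ∨ w = 1) :
    ∫ ω, max (w * (X ω - K)) 0 ∂P =
      w * Real.exp (M + V ^ 2 / 2) * stdNormalCDF (w * (M - Real.log K + V ^ 2) / V)
        - w * K * stdNormalCDF (w * (M - Real.log K) / V) := by
  have hmeas : AEMeasurable (fun ω => Real.log (X ω)) P := by
    by_contra h
    rw [Measure.map_of_not_aemeasurable h] at hlaw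
    haveI := instIsProbabilityMeasureGaussianReal M (⟨V ^ 2, sq_nonneg V⟩ : ℝ≥0)
    exact (IsProbabilityMeasure.ne_zero
      (gaussianReal M (⟨V ^ 2, sq_nonneg V⟩ : ℝ≥0))) hlaw.symm
  have hcomp : ∀ ω, max (w * (X ω - K)) 0
      = (fun y => max (w * (Real.exp y - K)) 0) (Real.log (X ω)) := by
    intro ω
    simp only [Real.exp_log (hXpos ω)]
  have hcont : AEStronglyMeasurable (fun y => max (w * (Real.exp y - K)) 0)
      (Measure.map (fun ω => Real.log (X ω)) P) :=
    ((continuous_const.mul (Real.continuous_exp.sub continuous_const)).max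
      continuous_const).aestronglyMeasurable
  calc ∫ ω, max (w * (X ω - K)) 0 ∂P
      = ∫ ω, (fun y => max (w * (Real.exp y - K)) 0) (Real.log (X ω)) ∂P := by
        simp_rw [hcomp]
    _ = ∫ y, max (w * (Real.exp y - K)) 0
          ∂(Measure.map (fun ω => Real.log (X ω)) P) := (integral_map hmeas hcont).symm
    _ = ∫ y, max (w * (Real.exp y - K)) 0
          ∂(gaussianReal M (⟨V ^ 2, sq_nonneg V⟩ : ℝ≥0)) := by rw [hlaw]
    _ = w * Real.exp (M + V ^ 2 / 2) * stdNormalCDF (w * (M - Real.log K + V ^ 2) / V)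
        - w * K * stdNormalCDF (w * (M - Real.log K) / V) := by
        rcases hw with hw | hw <;> subst hw
        · have h1 : ∀ y : ℝ, (-1 : ℝ) * (Real.exp y - K) = K - Real.exp y := fun y => by ring
          simp_rw [h1]
          rw [LognormalAux.put_integral hV hK]
          have e1 : (-1 : ℝ) * (M - Real.log K + V ^ 2) / V = (Real.log K - M - V ^ 2) / V := by
            ring
          have e2 : (-1 : ℝ) * (M - Real.log K) / V = (Real.log K - M) / V := by ring
          rw [e1, e2]; ring
        · have h1 : ∀ y : ℝ, (1 : ℝ) * (Real.exp y - K) = Real.exp y - K := fun y => by ring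
          simp_rw [h1]
          rw [LognormalAux.call_integral hV hK]
          rw [one_mul, one_mul, one_mul, one_mul]
end

section
/- Let R be a positive random variable on some probability space such that log R is Gaussian with variance V² (V > 0) and E[R] = P₂/P₁ for positive constants P₁, P₂, and let K > 0. Then P₁·E[max(R − K, 0)] = P₂·N(h) − K·P₁·N(h − V) and P₁·E[max(K − R, 0)] = −P₂·N(−h) + K·P₁·N(V − h), where h = (1/V)·log(P₂/(P₁·K)) + V/2 and N is the standard normal cumulative distribution function. -/
open MeasureTheory ProbabilityTheory
open scoped NNReal

namespace ZBOaux

open Real Set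
open scoped ENNReal

lemma integral_gaussianReal' {m : ℝ} {v : ℝ≥0} (hv : v ≠ 0) (g : ℝ → ℝ) :
    ∫ x, g x ∂(gaussianReal m v) = ∫ x, gaussianPDFReal m v x * g x := by
  rw [gaussianReal_of_var_ne_zero _ hv]
  have h1 : (gaussianPDF m v) = fun x => (((gaussianPDFReal m v x).toNNReal : ℝ≥0) : ℝ≥0∞) :=
    rfl
  rw [h1, integral_withDensity_eq_integral_smul
    ((measurable_gaussianPDFReal m v).real_toNNReal) g]
  congr 1
  ext x
  simp [NNReal.smul_def, Real.coe_toNNReal _ (gaussianPDFReal_nonneg m v x)]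

lemma integrable_gaussianReal_iff {m : ℝ} {v : ℝ≥0} (hv : v ≠ 0) (g : ℝ → ℝ) :
    Integrable g (gaussianReal m v) ↔
      Integrable (fun x => gaussianPDFReal m v x * g x) volume := by
  rw [gaussianReal_of_var_ne_zero _ hv]
  have h1 : (gaussianPDF m v) = fun x => (((gaussianPDFReal m v x).toNNReal : ℝ≥0) : ℝ≥0∞) :=
    rfl
  rw [h1, integrable_withDensity_iff_integrable_smul
    ((measurable_gaussianPDFReal m v).real_toNNReal)]
  refine integrable_congr (ae_of_all _ fun x => ?_)
  simp [NNReal.smul_def, Real.coe_toNNReal _ (gaussianPDFReal_nonneg m v x)]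

lemma pdf_mul_exp {m V : ℝ} (hV : 0 < V) (x : ℝ) :
    gaussianPDFReal m (⟨V ^ 2, sq_nonneg V⟩ : ℝ≥0) x * Real.exp x =
      Real.exp (m + V ^ 2 / 2) *
        gaussianPDFReal (m + V ^ 2) (⟨V ^ 2, sq_nonneg V⟩ : ℝ≥0) x := by
  rw [show (⟨V ^ 2, sq_nonneg V⟩ : ℝ≥0) = NNReal.mk (V ^ 2) (sq_nonneg V) from rfl]
  simp only [gaussianPDFReal, NNReal.coe_mk]
  have hV2 : (V:ℝ) ^ 2 ≠ 0 := by positivity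
  have key : -(x - m) ^ 2 / (2 * V ^ 2) + x =
      (m + V ^ 2 / 2) + -(x - (m + V ^ 2)) ^ 2 / (2 * V ^ 2) := by
    field_simp
    ring
  rw [mul_assoc, ← Real.exp_add, key, Real.exp_add]
  ring

lemma stdNormalCDF_eq (y : ℝ) :
    stdNormalCDF y = ∫ x in Set.Iic y, gaussianPDFReal 0 1 x := by
  unfold stdNormalCDF
  congr 1
  funext x
  simp [gaussianPDFReal]

lemma stdNormalCDF_neg (y : ℝ) : stdNormalCDF (-y) = 1 - stdNormalCDF y := by
  have hint : Integrable (gaussianPDFReal 0 1) := integrable_gaussianPDFReal 0 1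
  have htot : ∫ x, gaussianPDFReal 0 1 x = 1 := integral_gaussianPDFReal_eq_one 0 one_ne_zero
  have hsplit := intervalIntegral.integral_Iic_add_Ioi (b := y) (μ := volume)
    hint.integrableOn hint.integrableOn
  have heven : ∫ x in Ioi y, gaussianPDFReal 0 1 x
      = ∫ x in Iic (-y), gaussianPDFReal 0 1 x := by
    rw [← integral_comp_neg_Ioi]
    congr 1
    funext x
    simp [gaussianPDFReal, neg_sq]
  rw [stdNormalCDF_eq, stdNormalCDF_eq]
  linarith [hsplit, htot, heven]

lemma cdf_gaussian {V : ℝ} (hV : 0 < V) (m a : ℝ) :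
    ∫ x in Set.Iic a, gaussianPDFReal m (⟨V ^ 2, sq_nonneg V⟩ : ℝ≥0) x
      = stdNormalCDF ((a - m) / V) := by
  set v : ℝ≥0 := (⟨V ^ 2, sq_nonneg V⟩ : ℝ≥0) with hvdef
  have hv : v ≠ 0 := by
    intro h
    have h2 : (v : ℝ) = 0 := by rw [h]; exact NNReal.coe_zero
    have h3 : (v : ℝ) = V ^ 2 := rfl
    exact (pow_ne_zero 2 hV.ne') (h3 ▸ h2)
  have hmeas1 : Measurable fun x : ℝ => V * x := by fun_prop
  have hmeas2 : Measurable fun x : ℝ => x + m := by fun_prop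
  have hmeas : Measurable fun x : ℝ => V * x + m := by fun_prop
  have hmap : gaussianReal m v = (gaussianReal 0 1).map (fun x => V * x + m) := by
    have h1 := gaussianReal_map_const_mul (μ := 0) (v := 1) V
    have h1' : Measure.map (fun x => V * x) (gaussianReal 0 1) = gaussianReal 0 v := by
      rw [h1, mul_one, mul_zero]; rfl
    have h2 := gaussianReal_map_add_const (μ := 0) (v := v) m
    rw [← h1', Measure.map_map hmeas2 hmeas1] at h2
    have hcomp : ((fun x : ℝ => x + m) ∘ fun x : ℝ => V * x) = fun x : ℝ => V * x + m := rfl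
    rw [hcomp, zero_add] at h2
    exact h2.symm
  have hpre : (fun x => V * x + m) ⁻¹' (Set.Iic a) = Set.Iic ((a - m) / V) := by
    ext x
    simp only [Set.mem_preimage, Set.mem_Iic]
    rw [le_div_iff₀ hV]
    constructor <;> intro h <;> nlinarith
  have h3 : gaussianReal m v (Set.Iic a) = gaussianReal 0 1 (Set.Iic ((a - m) / V)) := by
    rw [hmap, Measure.map_apply hmeas measurableSet_Iic, hpre]
  rw [gaussianReal_apply_eq_integral _ hv, gaussianReal_apply_eq_integral _ one_ne_zero] at h3
  rw [stdNormalCDF_eq]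
  have := (ENNReal.ofReal_eq_ofReal_iff
    (setIntegral_nonneg measurableSet_Iic fun x _ => gaussianPDFReal_nonneg _ _ _)
    (setIntegral_nonneg measurableSet_Iic fun x _ => gaussianPDFReal_nonneg _ _ _)).mp h3
  exact this

end ZBOaux

/-- Zero-coupon bond option (ZBO) Black-type formulas: if `R` is a
positive lognormal random variable with log-variance `V²` and mean `P₂/P₁`, then the
call and put prices have the stated form. -/
theorem zero_coupon_bond_option_formula
    {Ω : Type*} [MeasurableSpace Ω] (P : Measure Ω) [IsProbabilityMeasure P]
    (R : Ω → ℝ) (hRpos : ∀ ω, 0 < R ω)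
    (V : ℝ) (hV : 0 < V)
    (hlaw : ∃ m : ℝ, Measure.map (fun ω => Real.log (R ω)) P =
      gaussianReal m (⟨V ^ 2, sq_nonneg V⟩ : ℝ≥0))
    (P₁ P₂ : ℝ) (hP₁ : 0 < P₁) (hP₂ : 0 < P₂)
    (hmean : ∫ ω, R ω ∂P = P₂ / P₁)
    (K : ℝ) (hK : 0 < K) :
    P₁ * ∫ ω, max (R ω - K) 0 ∂P =
        P₂ * stdNormalCDF ((1 / V) * Real.log (P₂ / (P₁ * K)) + V / 2)
          - K * P₁ * stdNormalCDF ((1 / V) * Real.log (P₂ / (P₁ * K)) + V / 2 - V) ∧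
      P₁ * ∫ ω, max (K - R ω) 0 ∂P =
        -(P₂ * stdNormalCDF (-((1 / V) * Real.log (P₂ / (P₁ * K)) + V / 2)))
          + K * P₁ * stdNormalCDF (V - ((1 / V) * Real.log (P₂ / (P₁ * K)) + V / 2)) := by
  obtain ⟨m, hlaw⟩ := hlaw
  have hv : (⟨V ^ 2, sq_nonneg V⟩ : ℝ≥0) ≠ 0 := by
    intro hcon
    have h2 : ((⟨V ^ 2, sq_nonneg V⟩ : ℝ≥0) : ℝ) = 0 := by rw [hcon]; exact NNReal.coe_zero
    exact (pow_ne_zero 2 hV.ne') h2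
  have hae : AEMeasurable (fun ω => Real.log (R ω)) P := by
    by_contra hcon
    have h1 : gaussianReal m (⟨V ^ 2, sq_nonneg V⟩ : ℝ≥0) Set.univ = 1 :=
      measure_univ (μ := gaussianReal m (NNReal.mk (V ^ 2) (sq_nonneg V)))
    rw [← hlaw, Measure.map_of_not_aemeasurable hcon] at h1
    simp at h1
  have hRe : (fun ω => R ω) = fun ω => Real.exp (Real.log (R ω)) :=
    funext fun ω => (Real.exp_log (hRpos ω)).symm
  have hRae : AEMeasurable R P :=
    (Real.measurable_exp.comp_aemeasurable hae).congr
      (ae_of_all _ fun ω => Real.exp_log (hRpos ω))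
  have key : ∀ g : ℝ → ℝ, Measurable g →
      ∫ ω, g (Real.log (R ω)) ∂P
        = ∫ x, gaussianPDFReal m (⟨V ^ 2, sq_nonneg V⟩ : ℝ≥0) x * g x := by
    intro g hg
    rw [← ZBOaux.integral_gaussianReal' hv g, ← hlaw,
      integral_map hae hg.aestronglyMeasurable]
  have hpdfexp : (fun x => gaussianPDFReal m (⟨V ^ 2, sq_nonneg V⟩ : ℝ≥0) x * Real.exp x)
      = fun x => Real.exp (m + V ^ 2 / 2)
          * gaussianPDFReal (m + V ^ 2) (⟨V ^ 2, sq_nonneg V⟩ : ℝ≥0) x :=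
    funext fun x => ZBOaux.pdf_mul_exp hV x
  have hIntexp : Integrable
      (fun x => gaussianPDFReal m (⟨V ^ 2, sq_nonneg V⟩ : ℝ≥0) x * Real.exp x) volume := by
    rw [hpdfexp]; exact (integrable_gaussianPDFReal _ _).const_mul _
  have h0 : ∫ ω, R ω ∂P = Real.exp (m + V ^ 2 / 2) := by
    rw [hRe, key _ Real.measurable_exp, hpdfexp, integral_const_mul,
      integral_gaussianPDFReal_eq_one _ hv, mul_one]
  have hmean2 : Real.exp (m + V ^ 2 / 2) = P₂ / P₁ := by rw [← h0, hmean]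
  have hm : m = Real.log (P₂ / P₁) - V ^ 2 / 2 := by
    have h1 := congrArg Real.log hmean2
    rw [Real.log_exp] at h1
    linarith
  set L := Real.log K with hL
  have hput_raw : ∫ ω, max (K - R ω) 0 ∂P
      = K * stdNormalCDF ((L - m) / V)
        - Real.exp (m + V ^ 2 / 2) * stdNormalCDF ((L - (m + V ^ 2)) / V) := by
    have hg : Measurable fun x : ℝ => max (K - Real.exp x) 0 :=
      (measurable_const.sub Real.measurable_exp).max measurable_const
    have h1 : (fun ω => max (K - R ω) 0)
        = fun ω => (fun x => max (K - Real.exp x) 0) (Real.log (R ω)) :=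
      funext fun ω => by simp [Real.exp_log (hRpos ω)]
    rw [h1, key _ hg]
    have hind : (fun x => gaussianPDFReal m (⟨V ^ 2, sq_nonneg V⟩ : ℝ≥0) x
          * max (K - Real.exp x) 0)
        = Set.indicator (Set.Iic L)
            (fun x => K * gaussianPDFReal m (⟨V ^ 2, sq_nonneg V⟩ : ℝ≥0) x
              - gaussianPDFReal m (⟨V ^ 2, sq_nonneg V⟩ : ℝ≥0) x * Real.exp x) := by
      funext x
      by_cases hx : x ∈ Set.Iic L
      · rw [Set.indicator_of_mem hx]
        have hle : Real.exp x ≤ K := by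
          rw [← Real.exp_log hK]; exact Real.exp_le_exp.2 hx
        rw [max_eq_left (by linarith)]; ring
      · rw [Set.indicator_of_notMem hx]
        have hlt : K ≤ Real.exp x := by
          rw [← Real.exp_log hK]
          exact Real.exp_le_exp.2 (le_of_not_ge hx)
        rw [max_eq_right (by linarith), mul_zero]
    rw [hind, integral_indicator measurableSet_Iic,
      integral_sub (((integrable_gaussianPDFReal m (⟨V ^ 2, sq_nonneg V⟩ : ℝ≥0)).const_mul K).restrict)
        (hIntexp.restrict),
      integral_const_mul, ZBOaux.cdf_gaussian hV]
    have h2 : ∫ x in Set.Iic L, gaussianPDFReal m (⟨V ^ 2, sq_nonneg V⟩ : ℝ≥0) x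
          * Real.exp x
        = Real.exp (m + V ^ 2 / 2) * stdNormalCDF ((L - (m + V ^ 2)) / V) := by
      rw [show (fun x => gaussianPDFReal m (⟨V ^ 2, sq_nonneg V⟩ : ℝ≥0) x * Real.exp x)
          = fun x => Real.exp (m + V ^ 2 / 2)
              * gaussianPDFReal (m + V ^ 2) (⟨V ^ 2, sq_nonneg V⟩ : ℝ≥0) x from hpdfexp,
        integral_const_mul, ZBOaux.cdf_gaussian hV]
    rw [h2]
  have hIntR : Integrable R P := by
    have h1 : Integrable (fun x => Real.exp x)
        (gaussianReal m (⟨V ^ 2, sq_nonneg V⟩ : ℝ≥0)) :=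
      (ZBOaux.integrable_gaussianReal_iff hv _).2 hIntexp
    rw [← hlaw] at h1
    have h2 := (integrable_map_measure Real.measurable_exp.aestronglyMeasurable hae).mp h1
    exact h2.congr (ae_of_all _ fun ω => Real.exp_log (hRpos ω))
  have hIntPut : Integrable (fun ω => max (K - R ω) 0) P := by
    refine Integrable.mono' (integrable_const K)
      (((aemeasurable_const.sub hRae).max aemeasurable_const).aestronglyMeasurable)
      (ae_of_all _ fun ω => ?_)
    rw [Real.norm_eq_abs, abs_of_nonneg (le_max_right _ _)]
    have := hRpos ω
    exact max_le (by linarith) hK.le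
  have hmaxeq : (fun ω => max (R ω - K) 0) = fun ω => (R ω - K) + max (K - R ω) 0 := by
    funext ω
    rcases le_total (R ω) K with hc | hc
    · rw [max_eq_right (by linarith), max_eq_left (by linarith)]; ring
    · rw [max_eq_left (by linarith), max_eq_right (by linarith)]; ring
  have hcall : ∫ ω, max (R ω - K) 0 ∂P = (P₂ / P₁ - K) + ∫ ω, max (K - R ω) 0 ∂P := by
    have hIsub : Integrable (fun ω => R ω - K) P := hIntR.sub (integrable_const K)
    rw [hmaxeq, integral_add hIsub hIntPut,
      integral_sub hIntR (integrable_const K), hmean, integral_const]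
    simp
  set h := (1 / V) * Real.log (P₂ / (P₁ * K)) + V / 2 with hh
  have hlogsplit : Real.log (P₂ / (P₁ * K)) = Real.log (P₂ / P₁) - Real.log K := by
    rw [show P₂ / (P₁ * K) = (P₂ / P₁) / K from (div_div _ _ _).symm,
      Real.log_div (by positivity) hK.ne']
  have harg1 : (L - m) / V = V - h := by
    rw [hm, hh, hlogsplit, hL]; field_simp; ring
  have harg2 : (L - (m + V ^ 2)) / V = -h := by
    rw [hm, hh, hlogsplit, hL]; field_simp; ring
  have hsym1 : stdNormalCDF (-h) = 1 - stdNormalCDF h := ZBOaux.stdNormalCDF_neg h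
  have hsym2 : stdNormalCDF (V - h) = 1 - stdNormalCDF (h - V) := by
    have h1 := ZBOaux.stdNormalCDF_neg (h - V)
    rw [neg_sub] at h1
    exact h1
  constructor
  · rw [hcall, hput_raw, hmean2, harg1, harg2, hsym1, hsym2]
    field_simp
    ring
  · rw [hput_raw, hmean2, harg1, harg2]
    field_simp
    ring
end

section
/- Let M ≥ 1 be a natural number and for i = 1, …, M let c_i > 0, A_i > 0, B_i > 0 be real numbers. Let K > 0 and suppose n* ∈ ℝ satisfies Σ_{i=1}^M c_i·A_i·exp(−n*·B_i) = K. Then for every n ∈ ℝ, max(Σ_{i=1}^M c_i·A_i·exp(−n·B_i) − K, 0) = Σ_{i=1}^M c_i·max(A_i·exp(−n·B_i) − A_i·exp(−n*·B_i), 0). -/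
/-- Jamshidian's decomposition: the payoff of an option on a
coupon-bearing bond equals the payoff of a portfolio of options on the individual
zero-coupon bonds, struck at the bond prices evaluated at the critical rate `n*`. -/
theorem jamshidian_decomposition
    (M : ℕ) (hM : 1 ≤ M) (c A B : Fin M → ℝ)
    (hc : ∀ i, 0 < c i) (hA : ∀ i, 0 < A i) (hB : ∀ i, 0 < B i)
    (K : ℝ) (hK : 0 < K) (nstar : ℝ)
    (hstar : ∑ i, c i * A i * Real.exp (-nstar * B i) = K) :
    ∀ n : ℝ,
      max (∑ i, c i * A i * Real.exp (-n * B i) - K) 0 =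
        ∑ i, c i * max (A i * Real.exp (-n * B i) - A i * Real.exp (-nstar * B i)) 0 := by
  intro n
  rcases le_or_gt n nstar with h | h
  · have hle : ∀ i : Fin M, A i * Real.exp (-nstar * B i) ≤ A i * Real.exp (-n * B i) := by
      intro i
      have : -nstar * B i ≤ -n * B i := by nlinarith [(hB i)]
      exact mul_le_mul_of_nonneg_left (Real.exp_le_exp.mpr this) (hA i).le
    have h1 : ∀ i : Fin M,
        c i * max (A i * Real.exp (-n * B i) - A i * Real.exp (-nstar * B i)) 0
          = c i * A i * Real.exp (-n * B i) - c i * A i * Real.exp (-nstar * B i) := by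
      intro i
      rw [max_eq_left (by linarith [hle i])]
      ring
    rw [Finset.sum_congr rfl fun i _ => h1 i, Finset.sum_sub_distrib, hstar]
    have : 0 ≤ ∑ i, c i * A i * Real.exp (-n * B i) - K := by
      rw [← hstar, ← Finset.sum_sub_distrib]
      apply Finset.sum_nonneg
      intro i _
      have := hle i
      nlinarith [(hc i)]
    exact max_eq_left this
  · have hle : ∀ i : Fin M, A i * Real.exp (-n * B i) ≤ A i * Real.exp (-nstar * B i) := by
      intro i
      have : -n * B i ≤ -nstar * B i := by nlinarith [(hB i)]
      exact mul_le_mul_of_nonneg_left (Real.exp_le_exp.mpr this) (hA i).le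
    have h1 : ∀ i : Fin M,
        c i * max (A i * Real.exp (-n * B i) - A i * Real.exp (-nstar * B i)) 0 = 0 := by
      intro i
      rw [max_eq_right (by linarith [hle i])]; ring
    rw [Finset.sum_congr rfl fun i _ => h1 i, Finset.sum_const_zero]
    have : ∑ i, c i * A i * Real.exp (-n * B i) - K ≤ 0 := by
      rw [← hstar, ← Finset.sum_sub_distrib]
      apply Finset.sum_nonpos
      intro i _
      have := hle i
      nlinarith [(hc i)]
    exact max_eq_right this
end

section
/- Let Ω > 0, let Z : ℝ → ℝ be continuously differentiable, and let β : ℝ → ℝ be three times differentiable with continuous third derivative, with β'(t) ≠ 0 and β''(t) ≠ 0 for all t. Suppose that for all t ∈ ℝ, ∫_t^{t+Ω} Z(T) dT = −(Z(t + Ω) − Z(t))·β'(t)/β''(t). Then, for all t₀ and t, Z(t + Ω) − Z(t) = (Z(t₀ + Ω) − Z(t₀))·exp(∫_{t₀}^t −(2·β''(s)² − β'(s)·β'''(s))/(β'(s)·β''(s)) ds). -/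
open MeasureTheory

/-- Equating the CTCB mean-reversion speed
`(Z(t+Ω) − Z(t))/∫_t^{t+Ω} Z` with the Hull–White mean-reversion speed `−β''/β'`
forces the exponential relationship between the liquidity function `Z` and `β`. -/
theorem liquidity_function_relation
    (Ω : ℝ) (hΩ : 0 < Ω) (Z β : ℝ → ℝ)
    (hZ : ContDiff ℝ 1 Z) (hβ : ContDiff ℝ 3 β)
    (hβ' : ∀ t, deriv β t ≠ 0) (hβ'' : ∀ t, deriv (deriv β) t ≠ 0)
    (heq : ∀ t, (∫ T in t..(t + Ω), Z T) =
      -(Z (t + Ω) - Z t) * deriv β t / deriv (deriv β) t) :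
    ∀ t₀ t : ℝ,
      Z (t + Ω) - Z t =
        (Z (t₀ + Ω) - Z t₀) *
          Real.exp (∫ s in t₀..t,
            -(2 * (deriv (deriv β) s) ^ 2 - deriv β s * deriv (deriv (deriv β)) s) /
              (deriv β s * deriv (deriv β) s)) := by
  intro t₀ t
  -- basic regularity facts
  have hZd : Differentiable ℝ Z := hZ.differentiable one_ne_zero
  have hZc : Continuous Z := hZd.continuous
  have hβ2 : ContDiff ℝ 2 (deriv β) := by
    have := (contDiff_succ_iff_deriv (n := 2)).mp (by exact_mod_cast hβ)
    exact this.2.2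
  have hβ1 : ContDiff ℝ 1 (deriv (deriv β)) := by
    have := (contDiff_succ_iff_deriv (n := 1)).mp (by exact_mod_cast hβ2)
    exact this.2.2
  have hβ'd : Differentiable ℝ (deriv β) := hβ2.differentiable two_ne_zero
  have hβ''d : Differentiable ℝ (deriv (deriv β)) := hβ1.differentiable one_ne_zero
  have hβ'c : Continuous (deriv β) := hβ'd.continuous
  have hβ''c : Continuous (deriv (deriv β)) := hβ''d.continuous
  have hβ'''c : Continuous (deriv (deriv (deriv β))) := hβ1.continuous_deriv le_rfl
  -- the function u and its derivative
  set u : ℝ → ℝ := fun s => Z (s + Ω) - Z s with hu_def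
  have hu : ∀ s : ℝ, HasDerivAt u (deriv Z (s + Ω) - deriv Z s) s := by
    intro s
    have h1 : HasDerivAt (fun x : ℝ => Z (x + Ω)) (deriv Z (s + Ω)) s := by
      have := ((hZd (s + Ω)).hasDerivAt).comp s
        ((hasDerivAt_id s).add_const Ω)
      simpa [Function.comp_def] using this
    exact h1.sub (hZd s).hasDerivAt
  -- the integral function and its derivative
  set G : ℝ → ℝ := fun s => ∫ T in s..(s + Ω), Z T with hG_def
  have hGderiv : ∀ s : ℝ, HasDerivAt G (u s) s := by
    intro s
    have hGeq : G = fun x => (∫ T in (0:ℝ)..(x + Ω), Z T) - ∫ T in (0:ℝ)..x, Z T := by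
      funext x
      rw [hG_def]
      have h := intervalIntegral.integral_add_adjacent_intervals (μ := volume)
        (hZc.intervalIntegrable 0 x) (hZc.intervalIntegrable x (x + Ω))
      linarith [h]
    rw [hGeq]
    have h1 : HasDerivAt (fun x : ℝ => ∫ T in (0:ℝ)..(x + Ω), Z T) (Z (s + Ω)) s := by
      have h0 : HasDerivAt (fun y : ℝ => ∫ T in (0:ℝ)..y, Z T) (Z (s + Ω)) (s + Ω) :=
        (hZc.integral_hasStrictDerivAt 0 (s + Ω)).hasDerivAt
      have := h0.comp s ((hasDerivAt_id s).add_const Ω)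
      simpa [Function.comp_def] using this
    have h2 : HasDerivAt (fun y : ℝ => ∫ T in (0:ℝ)..y, Z T) (Z s) s :=
      (hZc.integral_hasStrictDerivAt 0 s).hasDerivAt
    exact h1.sub h2
  -- the ODE satisfied by u
  set f : ℝ → ℝ := fun s =>
    -(2 * (deriv (deriv β) s) ^ 2 - deriv β s * deriv (deriv (deriv β)) s) /
      (deriv β s * deriv (deriv β) s) with hf_def
  have hode : ∀ s : ℝ, HasDerivAt u (f s * u s) s := by
    intro s
    -- G = -u * β' / β''
    have hGR : G = fun x => -u x * deriv β x / deriv (deriv β) x := by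
      funext x; exact heq x
    -- derivative of the RHS
    have hR : HasDerivAt (fun x => -u x * deriv β x / deriv (deriv β) x)
        (((-(deriv Z (s + Ω) - deriv Z s) * deriv β s + (-u s) * deriv (deriv β) s) *
            deriv (deriv β) s -
          (-u s * deriv β s) * deriv (deriv (deriv β)) s) / (deriv (deriv β) s) ^ 2) s := by
      exact (((hu s).neg.mul (hβ'd s).hasDerivAt).div (hβ''d s).hasDerivAt (hβ'' s))
    have hGs : HasDerivAt G
        (((-(deriv Z (s + Ω) - deriv Z s) * deriv β s + (-u s) * deriv (deriv β) s) *
            deriv (deriv β) s -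
          (-u s * deriv β s) * deriv (deriv (deriv β)) s) / (deriv (deriv β) s) ^ 2) s := by
      rw [hGR]; exact hR
    -- two expressions for the derivative of G
    have hkey : u s =
        ((-(deriv Z (s + Ω) - deriv Z s) * deriv β s + (-u s) * deriv (deriv β) s) *
            deriv (deriv β) s -
          (-u s * deriv β s) * deriv (deriv (deriv β)) s) / (deriv (deriv β) s) ^ 2 :=
      (hGderiv s).unique hGs
    have hsolve : deriv Z (s + Ω) - deriv Z s = f s * u s := by
      rw [hf_def]
      have hb2 : (deriv (deriv β) s) ^ 2 ≠ 0 := pow_ne_zero _ (hβ'' s)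
      rw [eq_div_iff hb2] at hkey
      rw [div_mul_eq_mul_div, eq_div_iff (mul_ne_zero (hβ' s) (hβ'' s))]
      linear_combination hkey
    rw [← hsolve]; exact hu s
  -- continuity of f
  have hfc : Continuous f := by
    rw [hf_def]
    exact ((continuous_const.mul (hβ''c.pow 2)).sub (hβ'c.mul hβ'''c)).neg.div
      (hβ'c.mul hβ''c) (fun x => mul_ne_zero (hβ' x) (hβ'' x))
  -- the integral F of f
  set F : ℝ → ℝ := fun x => ∫ s in t₀..x, f s with hF_def
  have hFderiv : ∀ x : ℝ, HasDerivAt F (f x) x := fun x =>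
    (hfc.integral_hasStrictDerivAt t₀ x).hasDerivAt
  -- u(x) * exp(-F x) is constant
  set h : ℝ → ℝ := fun x => u x * Real.exp (-F x) with hh_def
  have hhderiv : ∀ x : ℝ, HasDerivAt h 0 x := by
    intro x
    have hE : HasDerivAt (fun y => Real.exp (-F y)) (-f x * Real.exp (-F x)) x := by
      have := ((hFderiv x).neg).exp
      simpa [mul_comm] using this
    have := ((hode x).mul hE : HasDerivAt (fun y => u y * Real.exp (-F y)) _ x)
    have e : (0:ℝ) = f x * u x * Real.exp (-F x) + u x * (-f x * Real.exp (-F x)) := by ring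
    rw [e]; exact this
  have hconst : h t = h t₀ := by
    have hd : Differentiable ℝ h := fun x => (hhderiv x).differentiableAt
    have hz : ∀ x, deriv h x = 0 := fun x => (hhderiv x).deriv
    exact is_const_of_deriv_eq_zero hd hz t t₀
  have hFt₀ : F t₀ = 0 := by simp [hF_def]
  have : u t * Real.exp (-F t) = u t₀ := by
    have := hconst
    rw [hh_def] at this
    simpa [hFt₀] using this
  have hfin : u t = u t₀ * Real.exp (F t) := by
    have h2 := congrArg (fun y => y * Real.exp (F t)) this
    simpa [mul_assoc, ← Real.exp_add] using h2
  simpa [hu_def, hF_def, hf_def] using hfin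
end
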